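/- For 1 < ν ≤ 2, the coefficients ω_k^{(ν)} := (-1)^k Γ(ν+1) / (Γ(ν/2 - k + 1) Γ(ν/2 + k + 1)) satisfy ∑_{k=-∞}^{∞} ω_k^{(ν)} = 0. -/

import Mathlib

/-- The fractional centered difference coefficients
`ω_k^{(ν)} = (-1)^k Γ(ν+1) / (Γ(ν/2 - k + 1) Γ(ν/2 + k + 1))`.
When `Γ` has a pole in the denominator, `Real.Gamma` vanishes there and the
division by zero yields `0`, matching the convention that the coefficient is `0`. -/
noncomputable def omegaCoeff (ν : ℝ) (k : ℤ) : ℝ :=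
  (-1 : ℝ) ^ k * Real.Gamma (ν + 1) /
    (Real.Gamma (ν / 2 - k + 1) * Real.Gamma (ν / 2 + k + 1))

open Real Filter Finset

lemma omegaCoeff_neg (ν : ℝ) (k : ℤ) : omegaCoeff ν (-k) = omegaCoeff ν k := by
  unfold omegaCoeff
  have h0 : ((-1 : ℝ)) ^ k * (-1) ^ k = 1 := by
    rw [← zpow_add₀ (by norm_num : (-1:ℝ) ≠ 0), ← two_mul, zpow_mul]
    norm_num
  have h1 : ((-1 : ℝ)) ^ (-k) = (-1) ^ k := by
    rw [zpow_neg]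
    exact inv_eq_of_mul_eq_one_right h0
  rw [h1]
  push_cast
  ring_nf

lemma sym_sum (ω : ℤ → ℝ) (hsym : ∀ k : ℤ, ω (-k) = ω k) (n : ℕ) :
    ∑ k ∈ Finset.Icc (-(n : ℤ)) (n : ℤ), ω k
      = ω 0 + 2 * ∑ i ∈ Finset.range n, ω (i + 1) := by
  induction n with
  | zero => simp
  | succ n ih =>
    have hset : Finset.Icc (-((n : ℤ) + 1)) ((n : ℤ) + 1)
        = insert (-((n : ℤ) + 1)) (insert ((n : ℤ) + 1) (Finset.Icc (-(n : ℤ)) (n : ℤ))) := by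
      ext k
      simp only [Finset.mem_Icc, Finset.mem_insert]
      omega
    have h1 : ((n : ℤ) + 1) ∉ Finset.Icc (-(n : ℤ)) (n : ℤ) := by
      simp [Finset.mem_Icc]
    have h2 : (-((n : ℤ) + 1)) ∉ insert ((n : ℤ) + 1) (Finset.Icc (-(n : ℤ)) (n : ℤ)) := by
      simp only [Finset.mem_insert, Finset.mem_Icc]
      omega
    have hcast : ((n + 1 : ℕ) : ℤ) = (n : ℤ) + 1 := by push_cast; ring
    rw [hcast, hset, Finset.sum_insert h2, Finset.sum_insert h1, ih, Finset.sum_range_succ,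
      hsym ((n : ℤ) + 1)]
    push_cast
    ring

/-- The key telescoping identity, via Euler's reflection formula. -/
lemma key_identity (s A : ℝ) (hs1 : 1/2 < s) (hs2 : s < 1) (i : ℕ) :
    (-1 : ℝ) ^ (i + 1) * A / (Real.Gamma (s - ((i : ℝ) + 1) + 1) * Real.Gamma (s + ((i : ℝ) + 1) + 1))
      = (-(A * Real.sin (π * s) / (2 * π * s))) *
        (Real.Gamma ((i : ℝ) + 1 - s) / Real.Gamma ((i : ℝ) + 1 + s)
          - Real.Gamma (((i : ℝ) + 1) + 1 - s) / Real.Gamma (((i : ℝ) + 1) + 1 + s)) := by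
  have hs0 : 0 < s := by linarith
  set x : ℝ := (i : ℝ) + 1 - s with hx
  have hxpos : 0 < x := by
    have : (0:ℝ) ≤ (i : ℝ) := Nat.cast_nonneg i
    simp only [hx]; linarith
  have hΓx : Real.Gamma x ≠ 0 := (Real.Gamma_pos_of_pos hxpos).ne'
  have hypos : 0 < (i : ℝ) + 1 + s := by positivity
  have hΓy : Real.Gamma ((i : ℝ) + 1 + s) ≠ 0 := (Real.Gamma_pos_of_pos hypos).ne'
  have hsinpos : 0 < Real.sin (π * s) := by
    apply Real.sin_pos_of_pos_of_lt_pi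
    · positivity
    · nlinarith [Real.pi_pos]
  have hsinne : Real.sin (π * s) ≠ 0 := hsinpos.ne'
  have hπ : (π : ℝ) ≠ 0 := Real.pi_ne_zero
  -- reflection formula
  have hsin : Real.sin (π * x) = (-1) ^ i * Real.sin (π * s) := by
    have h : π * x = ((i + 1 : ℕ) : ℝ) * π - π * s := by
      simp only [hx]; push_cast; ring
    rw [h, Real.sin_nat_mul_pi_sub, pow_succ]
    ring
  have hsinx : Real.sin (π * x) ≠ 0 := by
    rw [hsin]
    rcases Nat.even_or_odd i with h | h
    · rw [h.neg_one_pow]; simpa using hsinne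
    · rw [h.neg_one_pow]; simpa using hsinne
  have hrefl := Real.Gamma_mul_Gamma_one_sub x
  rw [eq_div_iff hsinx] at hrefl
  -- hrefl : Γ x * Γ (1 - x) * sin (π x) = π
  have h1mx : (1 : ℝ) - x = s - ((i : ℝ) + 1) + 1 := by simp only [hx]; ring
  have hΓ1mx_ne : Real.Gamma ((1:ℝ) - x) ≠ 0 := by
    intro h0
    rw [h0, mul_zero, zero_mul] at hrefl
    exact hπ hrefl.symm
  have hΓs : Real.Gamma (s - ((i : ℝ) + 1) + 1) = π / (Real.sin (π * x) * Real.Gamma x) := by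
    rw [← h1mx, eq_div_iff (mul_ne_zero hsinx hΓx)]
    linarith [hrefl]
  -- Gamma recurrences
  have e2 : Real.Gamma (s + ((i : ℝ) + 1) + 1) = ((i : ℝ) + 1 + s) * Real.Gamma ((i : ℝ) + 1 + s) := by
    rw [show s + ((i : ℝ) + 1) + 1 = ((i : ℝ) + 1 + s) + 1 by ring, Real.Gamma_add_one hypos.ne']
  have e3 : Real.Gamma (((i : ℝ) + 1) + 1 - s) = x * Real.Gamma x := by
    rw [show ((i : ℝ) + 1) + 1 - s = x + 1 by simp only [hx]; ring, Real.Gamma_add_one hxpos.ne']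
  have e4 : Real.Gamma (((i : ℝ) + 1) + 1 + s) = ((i : ℝ) + 1 + s) * Real.Gamma ((i : ℝ) + 1 + s) := by
    rw [show ((i : ℝ) + 1) + 1 + s = ((i : ℝ) + 1 + s) + 1 by ring, Real.Gamma_add_one hypos.ne']
  rw [hΓs, e2, e3, e4, hsin]
  have hyne : ((i : ℝ) + 1 + s) ≠ 0 := hypos.ne'
  rcases Nat.even_or_odd i with h | h
  · rw [pow_succ, h.neg_one_pow]
    field_simp
    ring
  · rw [pow_succ, h.neg_one_pow]
    field_simp
    ring

theorem omegaCoeff_tsum_eq_zero (ν : ℝ) (hν1 : 1 < ν) (hν2 : ν ≤ 2) : ∑' k : ℤ, omegaCoeff ν k = 0 := by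
  rcases eq_or_lt_of_le hν2 with heq | hlt
  · -- ν = 2 : finitely many nonzero terms
    subst heq
    have hsupp : ∀ k : ℤ, k ∉ ({-1, 0, 1} : Finset ℤ) → omegaCoeff 2 k = 0 := by
      intro k hk
      simp only [Finset.mem_insert, Finset.mem_singleton] at hk
      push_neg at hk
      unfold omegaCoeff
      rcases le_or_gt 2 k with h | h
      · obtain ⟨m, rfl⟩ : ∃ m : ℕ, k = (m : ℤ) + 2 := ⟨(k - 2).toNat, by omega⟩
        have : (2:ℝ) / 2 - ((m : ℤ) + 2 : ℤ) + 1 = -(m : ℝ) := by push_cast; ring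
        rw [this, Real.Gamma_neg_nat_eq_zero, zero_mul, div_zero]
      · have h2 : k ≤ -2 := by omega
        obtain ⟨m, rfl⟩ : ∃ m : ℕ, k = -((m : ℤ) + 2) := ⟨(-k - 2).toNat, by omega⟩
        have : (2:ℝ) / 2 + (-((m : ℤ) + 2) : ℤ) + 1 = -(m : ℝ) := by push_cast; ring
        rw [this, Real.Gamma_neg_nat_eq_zero, mul_zero, div_zero]
    rw [tsum_eq_sum hsupp]
    have e1 : omegaCoeff 2 (-1) = -1 := by unfold omegaCoeff; norm_num
    have e0 : omegaCoeff 2 0 = 2 := by unfold omegaCoeff; norm_num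
    have e2 : omegaCoeff 2 1 = -1 := by unfold omegaCoeff; norm_num
    rw [Finset.sum_insert (by decide), Finset.sum_insert (by decide), Finset.sum_singleton]
    rw [e1, e0, e2]; ring
  · -- 1 < ν < 2
    set s : ℝ := ν / 2 with hs
    have hs1 : 1/2 < s := by simp only [hs]; linarith
    have hs2 : s < 1 := by simp only [hs]; linarith
    have hs0 : 0 < s := by linarith
    set g : ℕ → ℝ := fun i => Real.Gamma ((i : ℝ) + 1 - s) / Real.Gamma ((i : ℝ) + 1 + s) with hg
    set C : ℝ := -(Real.Gamma (ν + 1) * Real.sin (π * s) / (2 * π * s)) with hC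
    have hkey : ∀ i : ℕ, omegaCoeff ν ((i : ℤ) + 1) = C * (g i - g (i + 1)) := by
      intro i
      unfold omegaCoeff
      have hz : ((-1 : ℝ)) ^ ((i : ℤ) + 1) = (-1 : ℝ) ^ (i + 1) := by
        rw [show ((i : ℤ) + 1) = ((i + 1 : ℕ) : ℤ) by push_cast; ring, zpow_natCast]
      rw [hz]
      have hc1 : (((i : ℤ) + 1 : ℤ) : ℝ) = (i : ℝ) + 1 := by push_cast; ring
      rw [hc1]
      have := key_identity s (Real.Gamma (ν + 1)) hs1 hs2 i
      simp only [hg, hC]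
      push_cast
      convert this using 3 <;> push_cast <;> ring
    have hsym : ∀ k : ℤ, omegaCoeff ν (-k) = omegaCoeff ν k := omegaCoeff_neg ν
    -- the value at zero
    have hrefl0 : Real.Gamma s * Real.Gamma (1 - s) * Real.sin (π * s) = π := by
      have hsinpos : 0 < Real.sin (π * s) := by
        apply Real.sin_pos_of_pos_of_lt_pi
        · positivity
        · nlinarith [Real.pi_pos]
      have := Real.Gamma_mul_Gamma_one_sub s
      rw [eq_div_iff hsinpos.ne'] at this
      exact this
    have hΓs_ne : Real.Gamma s ≠ 0 := (Real.Gamma_pos_of_pos hs0).ne'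
    have hΓ1ms_ne : Real.Gamma (1 - s) ≠ 0 := (Real.Gamma_pos_of_pos (by linarith)).ne'
    have hsinne : Real.sin (π * s) ≠ 0 := by
      intro h0; rw [h0, mul_zero] at hrefl0; exact Real.pi_ne_zero hrefl0.symm
    have hzero : omegaCoeff ν 0 + 2 * C * g 0 = 0 := by
      unfold omegaCoeff
      simp only [hg, hC]
      have hc0 : ((0 : ℤ) : ℝ) = 0 := by norm_num
      rw [hc0]
      have e1 : s - 0 + 1 = s + 1 := by ring
      have e2 : s + 0 + 1 = s + 1 := by ring
      have hΓs1 : Real.Gamma (s + 1) = s * Real.Gamma s := Real.Gamma_add_one hs0.ne'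
      have hc00 : ((0 : ℕ) : ℝ) = 0 := by norm_num
      rw [hc00]
      have e3 : (0 : ℝ) + 1 - s = 1 - s := by ring
      have e4 : (0 : ℝ) + 1 + s = s + 1 := by ring
      rw [e3, e4, hΓs1]
      have hsin_eq : Real.sin (π * s) = π / (Real.Gamma s * Real.Gamma (1 - s)) := by
        rw [eq_div_iff (mul_ne_zero hΓs_ne hΓ1ms_ne)]
        linarith [hrefl0]
      rw [hsin_eq]
      have : ν / 2 = s := rfl
      rw [this]
      rw [show s - (0:ℝ) + 1 = s + 1 by ring, show s + (0:ℝ) + 1 = s + 1 by ring, hΓs1]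
      have hπ := Real.pi_ne_zero
      field_simp
      ring
    -- partial sums on symmetric intervals
    have hsum_formula : ∀ n : ℕ, ∑ k ∈ Finset.Icc (-(n : ℤ)) (n : ℤ), omegaCoeff ν k
        = omegaCoeff ν 0 + 2 * C * (g 0 - g n) := by
      intro n
      rw [sym_sum _ hsym n]
      have : ∑ i ∈ Finset.range n, omegaCoeff ν ((i : ℤ) + 1)
          = C * (g 0 - g n) := by
        have h1 : ∀ i ∈ Finset.range n, omegaCoeff ν ((i : ℤ) + 1) = C * (g i - g (i+1)) :=
          fun i _ => hkey i
        rw [Finset.sum_congr rfl h1, ← Finset.mul_sum, Finset.sum_range_sub' g n]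
      rw [this]; ring
    -- g n → 0
    have hgpos : ∀ n : ℕ, 0 < g n := by
      intro n
      have h1 : (0:ℝ) < (n : ℝ) + 1 - s := by
        have := Nat.cast_nonneg (α := ℝ) n; linarith
      have h2 : (0:ℝ) < (n : ℝ) + 1 + s := by positivity
      exact div_pos (Real.Gamma_pos_of_pos h1) (Real.Gamma_pos_of_pos h2)
    have hgbound : ∀ n : ℕ, 1 ≤ n → g n ≤ 1 / ((n : ℝ) + 1 - s) := by
      intro n hn
      have hn1 : (1:ℝ) ≤ (n : ℝ) := by exact_mod_cast hn
      have hxpos : (0:ℝ) < (n : ℝ) + 1 - s := by linarith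
      have hmem1 : ((n : ℝ) + 2 - s) ∈ Set.Ici (2:ℝ) := by
        simp only [Set.mem_Ici]; linarith
      have hmem2 : ((n : ℝ) + 1 + s) ∈ Set.Ici (2:ℝ) := by
        simp only [Set.mem_Ici]; linarith
      have hle : (n : ℝ) + 2 - s ≤ (n : ℝ) + 1 + s := by linarith
      have hmono : Real.Gamma ((n : ℝ) + 2 - s) ≤ Real.Gamma ((n : ℝ) + 1 + s) :=
        Real.Gamma_strictMonoOn_Ici.monotoneOn hmem1 hmem2 hle
      have hrec : Real.Gamma ((n : ℝ) + 2 - s) = ((n : ℝ) + 1 - s) * Real.Gamma ((n : ℝ) + 1 - s) := by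
        rw [show (n : ℝ) + 2 - s = ((n : ℝ) + 1 - s) + 1 by ring, Real.Gamma_add_one hxpos.ne']
      have hΓnum : 0 < Real.Gamma ((n : ℝ) + 1 - s) := Real.Gamma_pos_of_pos hxpos
      have hΓden : 0 < Real.Gamma ((n : ℝ) + 1 + s) := Real.Gamma_pos_of_pos (by positivity)
      have key : ((n : ℝ) + 1 - s) * Real.Gamma ((n : ℝ) + 1 - s) ≤ Real.Gamma ((n : ℝ) + 1 + s) := by
        rw [← hrec]; exact hmono
      rw [hg]
      rw [div_le_div_iff₀ hΓden hxpos]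
      calc Real.Gamma ((n : ℝ) + 1 - s) * ((n : ℝ) + 1 - s)
          = ((n : ℝ) + 1 - s) * Real.Gamma ((n : ℝ) + 1 - s) := by ring
        _ ≤ Real.Gamma ((n : ℝ) + 1 + s) := key
        _ = 1 * Real.Gamma ((n : ℝ) + 1 + s) := by ring
    have hupper : Tendsto (fun n : ℕ => 1 / ((n : ℝ) + 1 - s)) atTop (nhds 0) := by
      have h1 : Tendsto (fun n : ℕ => (n : ℝ) + 1 - s) atTop atTop := by
        have h2 := tendsto_atTop_add_const_right atTop (1 - s)
          (tendsto_natCast_atTop_atTop (R := ℝ))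
        simpa only [show ∀ n : ℕ, (n : ℝ) + (1 - s) = (n : ℝ) + 1 - s from fun n => by ring]
          using h2
      simpa only [one_div, Pi.inv_def] using h1.inv_tendsto_atTop
    have hlim : Tendsto g atTop (nhds 0) := by
      apply squeeze_zero' (Eventually.of_forall fun n => (hgpos n).le)
        _ hupper
      filter_upwards [eventually_ge_atTop 1] with n hn
      exact hgbound n hn
    have hS : Tendsto (fun n : ℕ => ∑ k ∈ Finset.Icc (-(n : ℤ)) (n : ℤ), omegaCoeff ν k)
        atTop (nhds 0) := by
      have h1 : Tendsto (fun n : ℕ => omegaCoeff ν 0 + 2 * C * (g 0 - g n)) atTop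
          (nhds (omegaCoeff ν 0 + 2 * C * (g 0 - 0))) := by
        exact ((tendsto_const_nhds.sub hlim).const_mul (2 * C)).const_add (omegaCoeff ν 0)
      have h2 : omegaCoeff ν 0 + 2 * C * (g 0 - 0) = 0 := by
        rw [sub_zero]; linarith [hzero]
      rw [h2] at h1
      simpa only [hsum_formula] using h1
    by_cases hsumm : Summable (omegaCoeff ν)
    · have hmono : Monotone (fun n : ℕ => Finset.Icc (-(n : ℤ)) (n : ℤ)) := by
        intro a b hab
        apply Finset.Icc_subset_Icc
        · simp only [neg_le_neg_iff]; exact_mod_cast hab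
        · exact_mod_cast hab
      have hcov : ∀ k : ℤ, ∃ n : ℕ, k ∈ Finset.Icc (-(n : ℤ)) (n : ℤ) := by
        intro k
        refine ⟨k.natAbs, ?_⟩
        simp only [Finset.mem_Icc]
        omega
      have htend : Tendsto (fun n : ℕ => Finset.Icc (-(n : ℤ)) (n : ℤ)) atTop atTop :=
        tendsto_atTop_finset_of_monotone hmono hcov
      have h1 : Tendsto (fun n : ℕ => ∑ k ∈ Finset.Icc (-(n : ℤ)) (n : ℤ), omegaCoeff ν k)
          atTop (nhds (∑' k : ℤ, omegaCoeff ν k)) := hsumm.hasSum.comp htend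
      exact tendsto_nhds_unique h1 hS
    · exact tsum_eq_zero_of_not_summable hsumm
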